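/- Let Λ be the E8 root lattice realized inside Z^{1,8} as the orthogonal complement of k = -3l + e_1 + ... + e_8, let T = Hom(Λ, G_m) over an algebraically closed field, and let χ ∈ T. Fix a nodal genus-0 curve K with Pic^0(K) ≅ G_m, a point P_1 ∈ K_reg, and define P_{i+1} ∈ K_reg by P_{i+1} ~ P_i + χ(e_{i+1} - e_i) for 1 ≤ i ≤ 7 (using the degree-1 torsor identification K_reg ≅ Pic^1). Embed K in P^2 by the linear system of D = χ(l - e_1 - e_2 - e_3) + P_1 + P_2 + P_3. Then: three points P_{i_1}, P_{i_2}, P_{i_3} are collinear if and only if χ(l - e_{i_1} - e_{i_2} - e_{i_3}) = 1. -/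

import Mathlib

/-!
STATEMENT 13: the nodal-cubic construction on the E8 lattice.  Λ ⊂ Z^{1,8} is the
E8 lattice (orthogonal complement of kv = -3l + Σeᵢ), χ ∈ T = Hom(Λ, G_m) a
character.  On a nodal genus-0 curve K we have Pic⁰(K) ≅ G_m; fixing a point
P₁ ∈ K_reg, the translation-by-P₁ identification K_reg ≅ Pic¹(K) ≅ kˣ lets us
record each smooth point by its parameter in kˣ, and a degree-d divisor supported
on K_reg is determined up to linear equivalence by the product of the parameters
of its points.  The points P₁,…,P₈ are defined by P_{i+1} ~ P_i + χ(e_{i+1}-e_i),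
and K is embedded in P² by the linear system of D = χ(l-e₁-e₂-e₃) + P₁ + P₂ + P₃.
Three smooth points of the plane cubic are collinear iff their divisor sum is
linearly equivalent to the hyperplane section D, i.e. iff the product of their
parameters equals the parameter product of D.  Claim: P_{i₁}, P_{i₂}, P_{i₃}
are collinear iff χ(l - e_{i₁} - e_{i₂} - e_{i₃}) = 1.

(The character χ of Λ is presented as an additive-to-multiplicative homomorphism
on the ambient lattice Z^{1,8} = Fin 9 → ℤ; since Λ is a direct summand, every
character of Λ arises by restriction of such a homomorphism.)
-/

def lv : Fin 9 → ℤ := Pi.single 0 1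

def ev (i : Fin 8) : Fin 9 → ℤ := Pi.single i.succ 1

theorem stmt13 {k : Type*} [Field k] [IsAlgClosed k] [CharZero k]
    (χ : (Fin 9 → ℤ) →+ Additive kˣ)   -- a character of the E8 lattice
    (P : Fin 8 → kˣ)                    -- parameters of the points P₁,…,P₈ on K_reg ≅ kˣ
    (hP : ∀ i : Fin 7, P i.succ = P i.castSucc *
      Additive.toMul (χ (ev i.succ - ev i.castSucc)))  -- P_{i+1} ~ P_i + χ(e_{i+1} - e_i)
    (Dparam : kˣ)                       -- the parameter product of the hyperplane divisor D
    (hD : Dparam = Additive.toMul (χ (lv - ev 0 - ev 1 - ev 2)) * (P 0 * P 1 * P 2)) :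
    ∀ i₁ i₂ i₃ : Fin 8, i₁ ≠ i₂ → i₁ ≠ i₃ → i₂ ≠ i₃ →
      -- P_{i₁}, P_{i₂}, P_{i₃} are collinear in the embedding by |D| …
      ((P i₁ * P i₂ * P i₃ = Dparam) ↔
      -- … iff χ(l - e_{i₁} - e_{i₂} - e_{i₃}) = 1
        Additive.toMul (χ (lv - ev i₁ - ev i₂ - ev i₃)) = 1) := by
  have key : ∀ i : Fin 8, P i = P 0 * Additive.toMul (χ (ev i - ev 0)) := by
    intro i
    induction i using Fin.induction with
    | zero => simp
    | succ i ih =>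
        rw [hP i, ih, mul_assoc, ← toMul_add, ← map_add]
        congr 2
        abel
  intro i₁ i₂ i₃ _ _ _
  have hDe : Dparam = P i₁ * P i₂ * P i₃ *
      Additive.toMul (χ (lv - ev i₁ - ev i₂ - ev i₃)) := by
    rw [hD, key i₁, key i₂, key i₃, key 1, key 2]
    simp only [map_sub, map_add, toMul_sub, toMul_add]
    rw [← Additive.ofMul.apply_eq_iff_eq]
    simp only [ofMul_mul, ofMul_div, ofMul_toMul]
    abel
  rw [hDe]
  exact left_eq_mul
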